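/- Let 3 ≤ n < k+3 and set w = ⌈(k+1)/(n-2)⌉. In the ℓ-layered generalized crown ⋊_ℓ S^k_n with ℓ > w, for each j with 1 ≤ j ≤ ℓ - w + 1, the elements x^j_p ∈ X^j and x^{j+w}_q ∈ X^{j+w} are incomparable if and only if q is congruent modulo n+k to a value in {p + w(n-1) + 1, p + w(n-1) + 2, ..., p + w - 1}. -/

import Mathlib

/-- In the generalized crown `S^k_n` (indices in `ZMod (n+k)`), `b_i` is incomparable
with `a_u` iff `u ≡ i + t (mod n+k)` for some `0 ≤ t ≤ k`. -/
def crownMiss (k : ℕ) {N : ℕ} (i u : ZMod N) : Prop :=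
  ∃ t : ℕ, t ≤ k ∧ u = i + (t : ZMod N)

/-- One step of the layered generalized crown `⋊_ℓ S^k_n` on `ℕ × ZMod (n+k)`:
`x^{i+1}_j` covers `x^i_m` exactly when `m` is a "hit" of `j`. -/
def layStep (k : ℕ) {N : ℕ} (x y : ℕ × ZMod N) : Prop :=
  y.1 = x.1 + 1 ∧ ¬ crownMiss k y.2 x.2

/-- The order of the layered generalized crown: reflexive transitive closure. -/
def layLe (k : ℕ) {N : ℕ} : ℕ × ZMod N → ℕ × ZMod N → Prop :=
  Relation.ReflTransGen (layStep k)

/-- The strict order of the layered generalized crown: transitive closure. -/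
def layLt (k : ℕ) {N : ℕ} : ℕ × ZMod N → ℕ × ZMod N → Prop :=
  Relation.TransGen (layStep k)

lemma step_iff (n k : ℕ) (hn : 3 ≤ n) (hk : 1 ≤ k) (x y : ZMod (n+k)) :
    (¬ crownMiss k y x) ↔ ∃ e : ℕ, 1 ≤ e ∧ e ≤ n - 1 ∧ y = x + (e : ZMod (n+k)) := by
  haveI : NeZero (n+k) := ⟨by omega⟩
  constructor
  · intro h
    set d := (x - y).val with hd
    have hdlt : d < n + k := ZMod.val_lt _
    have hdcast : ((d : ℕ) : ZMod (n+k)) = x - y := by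
      rw [hd]; simp [ZMod.natCast_val, ZMod.cast_id]
    have hdk : ¬ d ≤ k := by
      intro hdk
      exact h ⟨d, hdk, by rw [hdcast]; ring⟩
    refine ⟨n + k - d, by omega, by omega, ?_⟩
    have h2 : ((n + k - d : ℕ) : ZMod (n+k)) = y - x := by
      rw [Nat.cast_sub (le_of_lt hdlt), hdcast]
      linear_combination (ZMod.natCast_self (n+k))
    rw [h2]; ring
  · rintro ⟨e, he1, he2, rfl⟩ ⟨t, ht, hxt⟩
    have h0 : ((e + t : ℕ) : ZMod (n+k)) = 0 := by
      push_cast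
      linear_combination -hxt
    have hdvd := (ZMod.natCast_eq_zero_iff ..).mp h0
    have := Nat.le_of_dvd (by omega) hdvd
    omega

lemma layLe_fst {k N : ℕ} {x y : ℕ × ZMod N} (h : layLe k x y) : x.1 ≤ y.1 := by
  induction h with
  | refl => exact le_refl _
  | tail _ hstep ih => have := hstep.1; omega

lemma layLe_exists (n k : ℕ) (hn : 3 ≤ n) (hk : 1 ≤ k) {x y : ℕ × ZMod (n+k)}
    (h : layLe k x y) :
    ∃ S : ℕ, y.1 - x.1 ≤ S ∧ S ≤ (y.1 - x.1) * (n-1) ∧ y.2 = x.2 + (S : ZMod (n+k)) := by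
  induction h with
  | refl => exact ⟨0, by omega, by omega, by simp⟩
  | @tail b c hxb hstep ih =>
    obtain ⟨S, h1, h2, h3⟩ := ih
    have hfst := layLe_fst hxb
    obtain ⟨hl, hmiss⟩ := hstep
    obtain ⟨e, he1, he2, he3⟩ := (step_iff n k hn hk _ _).mp hmiss
    refine ⟨S + e, by omega, ?_, by rw [he3, h3]; push_cast; ring⟩
    have key : (c.1 - x.1) * (n-1) = (b.1 - x.1) * (n-1) + (n-1) := by
      rw [show c.1 - x.1 = (b.1 - x.1) + 1 by omega]; ring
    linarith

lemma exists_layLe (n k : ℕ) (hn : 3 ≤ n) (hk : 1 ≤ k) (a : ℕ) (p : ZMod (n+k)) :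
    ∀ m S : ℕ, m ≤ S → S ≤ m * (n-1) → layLe k (a, p) (a + m, p + (S : ZMod (n+k)))
  | 0, S, h1, h2 => by
      have hS : S = 0 := by simpa using h2
      subst hS
      simpa using (show layLe k (a,p) (a,p) from Relation.ReflTransGen.refl)
  | (m+1), S, h1, h2 => by
      have hid : (m+1) * (n-1) = m * (n-1) + (n-1) := by ring
      rw [hid] at h2
      obtain ⟨X, hX⟩ : ∃ X, m * (n-1) = X := ⟨_, rfl⟩
      rw [hX] at h2
      have hmX : m ≤ X := by rw [← hX]; exact Nat.le_mul_of_pos_right m (by omega)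
      set e := min (n-1) (S - m) with he
      have he1 : 1 ≤ e := by omega
      have he2 : e ≤ n - 1 := by omega
      have heS : e ≤ S := by omega
      have hS1 : m ≤ S - e := by omega
      have hS2 : S - e ≤ m * (n-1) := by rw [hX]; omega
      have prev := exists_layLe n k hn hk a p m (S - e) hS1 hS2
      refine Relation.ReflTransGen.tail prev ⟨rfl, ?_⟩
      rw [step_iff n k hn hk]
      refine ⟨e, he1, he2, ?_⟩
      show p + (S : ZMod (n+k)) = p + ((S - e : ℕ) : ZMod (n+k)) + (e : ℕ)
      rw [show (S : ZMod (n+k)) = ((S - e) + e : ℕ) by rw [Nat.sub_add_cancel heS]]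
      push_cast; ring

lemma modeq_eq_of_lt {N a b : ℕ} (h : a ≡ b [MOD N]) (h1 : b ≤ a) (h2 : a - b < N) :
    a = b := by
  have hd := (Nat.modEq_iff_dvd' h1).mp h.symm
  rcases Nat.eq_zero_or_pos (a - b) with h0 | h0
  · omega
  · have := Nat.le_of_dvd h0 hd; omega

/-- In `⋊_ℓ S^k_n` with `3 ≤ n < k+3`, `w = ⌈(k+1)/(n-2)⌉` and `ℓ > w`:
`x^j_p` and `x^{j+w}_q` are incomparable iff `q` lies in the cyclic interval
`{p + w(n-1) + 1, …, p + w - 1}` modulo `n+k`. -/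
theorem layered_extreme_inc (n k l w j : ℕ) (hn : 3 ≤ n) (hk : n < k + 3)
    (hw : w = (k + n - 2) / (n - 2)) (hl : w < l) (hj1 : 1 ≤ j) (hj2 : j ≤ l - w + 1)
    (p q : ZMod (n + k)) :
    (¬ layLe k (j, p) (j + w, q) ∧ ¬ layLe k (j + w, q) (j, p)) ↔
      ∃ s : ℕ, s < n + k - w * (n - 2) - 1 ∧
        q = p + ((w * (n - 1) + 1 + s : ℕ) : ZMod (n + k)) := by
  have hk1 : 1 ≤ k := by omega
  haveI : NeZero (n+k) := ⟨by omega⟩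
  -- arithmetic about w
  have hw1 : 1 ≤ w := by
    rw [hw]; exact (Nat.one_le_div_iff (by omega)).mpr (by omega)
  obtain ⟨r, hr, hdm⟩ : ∃ r, r < n - 2 ∧ k + n - 2 = (n-2) * w + r :=
    ⟨(k+n-2) % (n-2), Nat.mod_lt _ (by omega), by
      rw [hw]; exact (Nat.div_add_mod (k+n-2) (n-2)).symm⟩
  have hB : w * (n - 1) = w * (n - 2) + w := by
    rw [show n - 1 = (n-2) + 1 by omega]; ring
  have hcomm : (n - 2) * w = w * (n - 2) := by ring
  rw [hcomm] at hdm
  obtain ⟨A, hA⟩ : ∃ A, w * (n-2) = A := ⟨_, rfl⟩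
  rw [hA] at hdm hB
  have hA1 : k + 1 ≤ A := by omega
  have hA2 : A ≤ k + n - 2 := by omega
  -- comparability characterization
  have hcomp : layLe k (j, p) (j + w, q) ↔
      ∃ S : ℕ, w ≤ S ∧ S ≤ w * (n-1) ∧ q = p + (S : ZMod (n+k)) := by
    constructor
    · intro h
      obtain ⟨S, h1, h2, h3⟩ := layLe_exists n k hn hk1 h
      simp only at h1 h2 h3
      rw [show j + w - j = w by omega] at h1 h2
      exact ⟨S, h1, h2, h3⟩
    · rintro ⟨S, h1, h2, h3⟩
      rw [h3]
      exact exists_layLe n k hn hk1 j p w S h1 h2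
  have hrev : ¬ layLe k (j + w, q) (j, p) := by
    intro h
    have := layLe_fst h
    simp only at this
    omega
  -- canonical representative
  set v := (q - p - (w : ZMod (n+k))).val with hv
  have hvlt : v < n + k := ZMod.val_lt _
  set c := w + v with hc
  have hc_cast : ((c : ℕ) : ZMod (n+k)) = q - p := by
    rw [hc]
    push_cast
    rw [hv]
    simp [ZMod.natCast_val, ZMod.cast_id]
  have hqc : q = p + ((c : ℕ) : ZMod (n+k)) := by rw [hc_cast]; ring
  have huniq : ∀ S : ℕ, w ≤ S → S ≤ w + (n+k) - 1 → q = p + (S : ZMod (n+k)) → S = c := by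
    intro S h1 h2 h3
    have hcast : ((S : ℕ) : ZMod (n+k)) = ((c : ℕ) : ZMod (n+k)) := by
      rw [hc_cast, h3]; ring
    have hmod : S ≡ c [MOD n+k] := (ZMod.natCast_eq_natCast_iff _ _ _).mp hcast
    rcases le_total S c with hle | hle
    · exact (modeq_eq_of_lt hmod.symm hle (by omega)).symm
    · exact modeq_eq_of_lt hmod hle (by omega)
  rw [hcomp]
  rw [hB] at *
  constructor
  · rintro ⟨h1, -⟩
    have hcgt : A + w < c := by
      by_contra hcon
      push_neg at hcon
      exact h1 ⟨c, by omega, hcon, hqc⟩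
    refine ⟨c - (A + w) - 1, by omega, ?_⟩
    rw [show A + w + 1 + (c - (A + w) - 1) = c by omega]
    exact hqc
  · rintro ⟨s, hs, hq⟩
    refine ⟨?_, hrev⟩
    rintro ⟨S, h1, h2, h3⟩
    have e1 : S = c := huniq S h1 (by omega) h3
    have e2 : A + w + 1 + s = c := huniq _ (by omega) (by omega) hq
    omega
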